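/- Boundary diffeomorphism for Kerr-Newman-AdS: let $k \in \{1,-1\}$, $\Xi = 1 - ka^2/\ell^2 > 0$, $\Delta_\theta = 1 - (ka^2/\ell^2)c_k^2(\theta)$ where $c_1 = \cos$, $c_{-1} = \cosh$, $s_1 = \sin$, $s_{-1} = \sinh$. Under the coordinate change $\tau = t/\Xi$, $c_k(\Theta) = c_k(\theta)\sqrt{\Xi/\Delta_\theta}$, $\Phi = \varphi + kat/(\ell^2\Xi)$, the boundary metric $\hat{g} = -\Xi^{-2}dt^2 + \ell^2\Delta_\theta^{-1}d\theta^2 + \ell^2\Xi^{-1}s_k^2(\theta)d\varphi^2 + 2(ak/\Xi^2)s_k^2(\theta)dt\,d\varphi$ takes the form $\hat{g} = (\Delta_\theta/\Xi)\left(-d\tau^2 + \ell^2(d\Theta^2 + s_k^2(\Theta)d\Phi^2)\right)$; in particular $\hat{g}$ is conformal to the ultrastatic metric $-d\tau^2 + \ell^2(d\Theta^2 + s_k^2(\Theta)d\Phi^2)$ with conformal factor $\Omega^2 = \Xi/\Delta_\theta$. -/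

import Mathlib

noncomputable section

open Real

/-- **Boundary diffeomorphism for Kerr–Newman–AdS.** Let k = ±1,
Ξ = 1 - ka²/ℓ² > 0, Δ_θ = 1 - (ka²/ℓ²)c_k²(θ), where s_k, c_k satisfy
c_k² + k s_k² = 1, s_k' = c_k, c_k' = -k s_k. Under τ = t/Ξ,
c_k(Θ) = c_k(θ)√(Ξ/Δ_θ), Φ = φ + kat/(ℓ²Ξ), the boundary metric
ĝ = -Ξ⁻²dt² + ℓ²Δ_θ⁻¹dθ² + ℓ²Ξ⁻¹s_k²(θ)dφ² + 2(ak/Ξ²)s_k²(θ)dt dφ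
equals (Δ_θ/Ξ)(-dτ² + ℓ²(dΘ² + s_k²(Θ)dΦ²)). -/
theorem knads_deriv
    (k a ℓ : ℝ) (hk : k = 1 ∨ k = -1) (hℓ : 0 < ℓ)
    (hΞ : 0 < 1 - k * a ^ 2 / ℓ ^ 2)
    (sk ck : ℝ → ℝ)
    (hpyth : ∀ x : ℝ, ck x ^ 2 + k * sk x ^ 2 = 1)
    (hs : ∀ x : ℝ, HasDerivAt sk (ck x) x)
    (hc : ∀ x : ℝ, HasDerivAt ck (-(k * sk x)) x)
    (Θ : ℝ → ℝ) (hΘd : ∀ θ : ℝ, DifferentiableAt ℝ Θ θ)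
    (hΘ : ∀ θ : ℝ, ck (Θ θ) = ck θ *
      Real.sqrt ((1 - k * a ^ 2 / ℓ ^ 2) / (1 - k * a ^ 2 / ℓ ^ 2 * ck θ ^ 2)))
    (θ : ℝ) (hΔ : 0 < 1 - k * a ^ 2 / ℓ ^ 2 * ck θ ^ 2)
    (hS : sk (Θ θ) ≠ 0) :
    (deriv Θ θ) ^ 2 = (1 - k * a ^ 2 / ℓ ^ 2) / (1 - k * a ^ 2 / ℓ ^ 2 * ck θ ^ 2) ^ 2 := by
  have hk2 : k ^ 2 = 1 := by rcases hk with h | h <;> rw [h] <;> norm_num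
  set q : ℝ := k * a ^ 2 / ℓ ^ 2 with hq
  set Ξ : ℝ := 1 - q with hΞdef
  set Δ : ℝ := 1 - q * ck θ ^ 2 with hΔdef
  have hΞne : Ξ ≠ 0 := ne_of_gt hΞ
  have hΔne : Δ ≠ 0 := ne_of_gt hΔ
  have hupos : 0 < Ξ / Δ := div_pos hΞ hΔ
  set S : ℝ := Real.sqrt (Ξ / Δ) with hSdef
  have hSpos : 0 < S := Real.sqrt_pos.mpr hupos
  have hSne : S ≠ 0 := ne_of_gt hSpos
  have hS2 : S ^ 2 = Ξ / Δ := Real.sq_sqrt (le_of_lt hupos)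
  have hS2' : Δ * S ^ 2 = Ξ := by rw [hS2]; field_simp
  have hck2 : ck (Θ θ) ^ 2 = ck θ ^ 2 * (Ξ / Δ) := by
    rw [hΘ θ, mul_pow, ← hSdef, hS2]
  have hsk2 : sk (Θ θ) ^ 2 = sk θ ^ 2 / Δ := by
    have h1 := hpyth (Θ θ)
    have h2 := hpyth θ
    have : k * sk (Θ θ) ^ 2 = 1 - ck θ ^ 2 * (Ξ / Δ) := by rw [← hck2]; linarith
    have h4 : sk (Θ θ) ^ 2 = k * (1 - ck θ ^ 2 * (Ξ / Δ)) := by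
      linear_combination k * this - sk (Θ θ) ^ 2 * hk2
    rw [h4]
    have hc2 : ck θ ^ 2 = 1 - k * sk θ ^ 2 := by linarith
    field_simp
    rw [hΔdef, hc2]
    ring_nf
    nlinarith [hk2]
  have hs_ne : sk θ ≠ 0 := by
    intro h0
    apply hS
    have : sk (Θ θ) ^ 2 = 0 := by rw [hsk2, h0]; ring
    exact pow_eq_zero_iff (by norm_num) |>.mp this
  have hΔder : HasDerivAt (fun t => 1 - q * ck t ^ 2) (-(q * (2 * ck θ ^ 1 * -(k * sk θ)))) θ := by
    have := (((hc θ).pow 2).const_mul q).const_sub 1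
    simpa using this
  have huder : HasDerivAt (fun t => Ξ / (1 - q * ck t ^ 2))
      ((0 * Δ - Ξ * (-(q * (2 * ck θ ^ 1 * -(k * sk θ))))) / Δ ^ 2) θ :=
    (hasDerivAt_const θ Ξ).div hΔder hΔne
  set u' : ℝ := (0 * Δ - Ξ * (-(q * (2 * ck θ ^ 1 * -(k * sk θ))))) / Δ ^ 2 with hu'
  have hsqder : HasDerivAt (fun t => Real.sqrt (Ξ / (1 - q * ck t ^ 2)))
      (1 / (2 * S) * u') θ := by
    have h := (Real.hasDerivAt_sqrt (x := Ξ / Δ) (ne_of_gt hupos)).comp θ huder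
    exact h
  have hRHS : HasDerivAt (fun t => ck t * Real.sqrt (Ξ / (1 - q * ck t ^ 2)))
      (-(k * sk θ) * S + ck θ * (1 / (2 * S) * u')) θ := (hc θ).mul hsqder
  have hLHS : HasDerivAt (fun t => ck (Θ t)) (-(k * sk (Θ θ)) * deriv Θ θ) θ :=
    (hc (Θ θ)).comp θ (hΘd θ).hasDerivAt
  have hfun : (fun t => ck (Θ t)) = fun t => ck t * Real.sqrt (Ξ / (1 - q * ck t ^ 2)) := by
    funext t; exact hΘ t
  rw [hfun] at hLHS
  have heq := hLHS.unique hRHS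
  have hu'val : u' = -(2 * Ξ * q * k * sk θ * ck θ) / Δ ^ 2 := by rw [hu']; ring
  -- multiply by S
  have hstep : (-(k * sk θ) * S + ck θ * (1 / (2 * S) * u')) * S
      = -(k * sk θ) * S ^ 2 + ck θ * (u' / 2) := by
    field_simp
  have heq3 : -(k * sk (Θ θ)) * deriv Θ θ * S = -(k * sk θ) * (Ξ / Δ) + ck θ * (u' / 2) := by
    have h := congrArg (· * S) heq
    rw [h, hstep, hS2]
  -- simplify RHS to -(k s Ξ)/Δ²
  have hrhs : -(k * sk θ) * (Ξ / Δ) + ck θ * ((-(2 * Ξ * q * k * sk θ * ck θ) / Δ ^ 2) / 2)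
      = -(k * sk θ * Ξ) / Δ ^ 2 := by
    rw [hΔdef]
    field_simp
    ring
  rw [hu'val, hrhs] at heq3
  have hsk2' : Δ * sk (Θ θ) ^ 2 = sk θ ^ 2 := by rw [hsk2]; field_simp
  have heq5 : -(k * sk (Θ θ)) * deriv Θ θ * S * Δ ^ 2 = -(k * sk θ * Ξ) := by
    have h := congrArg (· * Δ ^ 2) heq3
    rwa [div_mul_cancel₀ _ (pow_ne_zero 2 hΔne)] at h
  have hsq : (-(k * sk (Θ θ)) * deriv Θ θ * S * Δ ^ 2) ^ 2 = (-(k * sk θ * Ξ)) ^ 2 := by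
    rw [heq5]
  have h7 : sk θ ^ 2 * Ξ * ((deriv Θ θ) ^ 2 * Δ ^ 2) = sk θ ^ 2 * Ξ * Ξ := by
    linear_combination hsq + (-(k ^ 2 * (deriv Θ θ) ^ 2 * S ^ 2 * Δ ^ 3)) * hsk2'
      + (-(k ^ 2 * sk θ ^ 2 * (deriv Θ θ) ^ 2 * Δ ^ 2)) * hS2'
      + (-(sk θ ^ 2 * Ξ * (deriv Θ θ) ^ 2 * Δ ^ 2 - sk θ ^ 2 * Ξ ^ 2)) * hk2
  have h8 : (deriv Θ θ) ^ 2 * Δ ^ 2 = Ξ :=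
    mul_left_cancel₀ (mul_ne_zero (pow_ne_zero 2 hs_ne) hΞne) h7
  rw [eq_div_iff (pow_ne_zero 2 hΔne)]
  exact h8

set_option maxHeartbeats 1000000 in
theorem knads_boundary_conformally_ultrastatic
    (k a ℓ : ℝ) (hk : k = 1 ∨ k = -1) (hℓ : 0 < ℓ)
    (hΞ : 0 < 1 - k * a ^ 2 / ℓ ^ 2)
    (sk ck : ℝ → ℝ)
    (hpyth : ∀ x : ℝ, ck x ^ 2 + k * sk x ^ 2 = 1)
    (hs : ∀ x : ℝ, HasDerivAt sk (ck x) x)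
    (hc : ∀ x : ℝ, HasDerivAt ck (-(k * sk x)) x)
    (Θ : ℝ → ℝ) (hΘd : ∀ θ : ℝ, DifferentiableAt ℝ Θ θ)
    (hΘ : ∀ θ : ℝ, ck (Θ θ) = ck θ *
      Real.sqrt ((1 - k * a ^ 2 / ℓ ^ 2) / (1 - k * a ^ 2 / ℓ ^ 2 * ck θ ^ 2))) :
    ∀ x : Fin 3 → ℝ, 0 < 1 - k * a ^ 2 / ℓ ^ 2 * ck (x 1) ^ 2 →
      sk (Θ (x 1)) ≠ 0 →
      ∀ v : Fin 3 → ℝ,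
        -(v 0) ^ 2 / (1 - k * a ^ 2 / ℓ ^ 2) ^ 2
            + ℓ ^ 2 / (1 - k * a ^ 2 / ℓ ^ 2 * ck (x 1) ^ 2) * (v 1) ^ 2
            + ℓ ^ 2 / (1 - k * a ^ 2 / ℓ ^ 2) * sk (x 1) ^ 2 * (v 2) ^ 2
            + 2 * (a * k / (1 - k * a ^ 2 / ℓ ^ 2) ^ 2) * sk (x 1) ^ 2 * v 0 * v 2
          = ((1 - k * a ^ 2 / ℓ ^ 2 * ck (x 1) ^ 2) / (1 - k * a ^ 2 / ℓ ^ 2)) *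
            (-(v 0 / (1 - k * a ^ 2 / ℓ ^ 2)) ^ 2
              + ℓ ^ 2 * ((deriv Θ (x 1) * v 1) ^ 2
                + sk (Θ (x 1)) ^ 2 *
                    (v 2 + k * a * v 0 / (ℓ ^ 2 * (1 - k * a ^ 2 / ℓ ^ 2))) ^ 2)) := by
  intro x hΔpos hSne v
  have hT2 := knads_deriv k a ℓ hk hℓ hΞ sk ck hpyth hs hc Θ hΘd hΘ (x 1) hΔpos hSne
  have hk2 : k ^ 2 = 1 := by rcases hk with h | h <;> rw [h] <;> norm_num
  have hΞne : (1 - k * a ^ 2 / ℓ ^ 2) ≠ 0 := ne_of_gt hΞ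
  have hΔne : (1 - k * a ^ 2 / ℓ ^ 2 * ck (x 1) ^ 2) ≠ 0 := ne_of_gt hΔpos
  have hℓne : ℓ ≠ 0 := ne_of_gt hℓ
  have hupos : 0 < (1 - k * a ^ 2 / ℓ ^ 2) / (1 - k * a ^ 2 / ℓ ^ 2 * ck (x 1) ^ 2) :=
    div_pos hΞ hΔpos
  have hck2 : ck (Θ (x 1)) ^ 2 = ck (x 1) ^ 2 *
      ((1 - k * a ^ 2 / ℓ ^ 2) / (1 - k * a ^ 2 / ℓ ^ 2 * ck (x 1) ^ 2)) := by
    rw [hΘ (x 1), mul_pow, Real.sq_sqrt (le_of_lt hupos)]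
  have hsk2 : sk (Θ (x 1)) ^ 2 = sk (x 1) ^ 2 / (1 - k * a ^ 2 / ℓ ^ 2 * ck (x 1) ^ 2) := by
    have h1 := hpyth (Θ (x 1))
    have h2 := hpyth (x 1)
    have h3 : k * sk (Θ (x 1)) ^ 2 = 1 - ck (x 1) ^ 2 *
        ((1 - k * a ^ 2 / ℓ ^ 2) / (1 - k * a ^ 2 / ℓ ^ 2 * ck (x 1) ^ 2)) := by
      rw [← hck2]; linarith
    have h4 : sk (Θ (x 1)) ^ 2 = k * (1 - ck (x 1) ^ 2 *
        ((1 - k * a ^ 2 / ℓ ^ 2) / (1 - k * a ^ 2 / ℓ ^ 2 * ck (x 1) ^ 2))) := by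
      linear_combination k * h3 - sk (Θ (x 1)) ^ 2 * hk2
    have hc2 : ck (x 1) ^ 2 = 1 - k * sk (x 1) ^ 2 := by linarith
    rw [h4, hc2]
    rw [hc2] at hΔne
    rw [eq_div_iff hΔne]
    have key : (1 - k * sk (x 1) ^ 2) * ((1 - k * a ^ 2 / ℓ ^ 2) / (1 - k * a ^ 2 / ℓ ^ 2 * (1 - k * sk (x 1) ^ 2))) * (1 - k * a ^ 2 / ℓ ^ 2 * (1 - k * sk (x 1) ^ 2)) = (1 - k * sk (x 1) ^ 2) * (1 - k * a ^ 2 / ℓ ^ 2) := by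
      rw [mul_assoc, div_mul_cancel₀ _ hΔne]
    linear_combination (-k) * key + sk (x 1) ^ 2 * hk2
  have hc2 : ck (x 1) ^ 2 = 1 - k * sk (x 1) ^ 2 := by linarith [hpyth (x 1)]
  rw [mul_pow (deriv Θ (x 1)) (v 1), hT2, hsk2]
  rw [hc2] at hΔne ⊢
  have hq : k * a ^ 2 / ℓ ^ 2 * ℓ ^ 2 = k * a ^ 2 := div_mul_cancel₀ _ (pow_ne_zero 2 hℓne)
  generalize hD : 1 - k * a ^ 2 / ℓ ^ 2 * (1 - k * sk (x 1) ^ 2) = D at hΔne ⊢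
  generalize hX : 1 - k * a ^ 2 / ℓ ^ 2 = X at hΞne ⊢
  generalize hQ : k * a ^ 2 / ℓ ^ 2 = Q at hq hD hX
  field_simp
  linear_combination v 0 ^ 2 * D * ℓ ^ 2 * (hX - hD) + v 0 ^ 2 * D * k * sk (x 1) ^ 2 * hq


end
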